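/- If C₁, …, C_k are red-ended coloured-intervals and B₁, …, B_{k−1} are blue intervals, then r(C₁ + B₁ + C₂ + … + B_{k−1} + C_k) ≤ 2^{⌈log₂ k⌉} · Σ_{i=1}^{k} r(C_i). -/

import Mathlib

open scoped Classical

/-- A recolouring step: the configuration (list of lengths of monochromatic intervals,
with colours alternating, determined by the colour of the first interval) contains three
consecutive intervals of lengths `a`, `b`, `c`, and the middle one, being strictly shorter
than both neighbours, is recoloured, merging the three into one of length `a + b + c`. -/
structure Step where
  pre : List ℝ
  a : ℝ
  b : ℝ
  c : ℝ
  post : List ℝ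

namespace Step

/-- The configuration before the recolouring step. -/
def src (s : Step) : List ℝ := s.pre ++ s.a :: s.b :: s.c :: s.post

/-- The configuration after the recolouring step. -/
def tgt (s : Step) : List ℝ := s.pre ++ (s.a + s.b + s.c) :: s.post

/-- A step is valid if the middle interval is strictly shorter than both neighbours. -/
def Valid (s : Step) : Prop := s.b < s.a ∧ s.b < s.c

/-- The set of points (identifying a configuration with a partition of `(0, total length]`
into half-open intervals) that get recoloured by the step: the middle interval. -/
def middle (s : Step) : Set ℝ :=
  Set.Ioc (s.pre.sum + s.a) (s.pre.sum + s.a + s.b)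

end Step

/-- `Reduces l steps m`: starting from configuration `l`, performing the given sequence of
valid recolouring steps yields configuration `m`. -/
inductive Reduces : List ℝ → List Step → List ℝ → Prop
  | nil (l : List ℝ) : Reduces l [] l
  | cons (s : Step) (hs : s.Valid) {steps : List Step} {m : List ℝ} :
      Reduces s.tgt steps m → Reduces s.src (s :: steps) m

/-- A configuration is closed if no further recolouring is possible; a sequence of
recolourings ending in a closed configuration is complete. -/
def IsClosedConfig (l : List ℝ) : Prop := ∀ s : Step, s.Valid → s.src ≠ l

/-- The number of times the point `x` is recoloured during a sequence of steps. -/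
noncomputable def recolourCount (steps : List Step) (x : ℝ) : ℕ :=
  (steps.filter fun s => decide (x ∈ s.middle)).length

/-- Non-degeneracy: with `p_i` the boundary points (partial sums of the lengths),
no two gap-distances coincide, i.e. `p_j - p_i ≠ p_k - p_j` for `i < j < k`. -/
def Nondegenerate (l : List ℝ) : Prop :=
  ∀ i j k : ℕ, i < j → j < k → k ≤ l.length →
    (l.take j).sum - (l.take i).sum ≠ (l.take k).sum - (l.take j).sum

/-- For a red-ended configuration (a list of lengths of odd length, the intervals at even
indices being red and those at odd indices blue), the total length of the red intervals. -/
def redSum (l : List ℝ) : ℝ :=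
  ∑ i ∈ Finset.range l.length, if i % 2 = 0 then l.getD i 0 else 0

/-- Interleave red-ended blocks `cs` with separating blue intervals `bs`:
`C₁ + B₁ + C₂ + … + B_{k-1} + C_k`. -/
def interleave : List (List ℝ) → List ℝ → List ℝ
  | [], _ => []
  | c :: _, [] => c
  | c :: cs, b :: bs => c ++ b :: interleave cs bs

namespace RedBlueAux

/-- Parity-shifted red sum. -/
def parSum (e : ℕ) (l : List ℝ) : ℝ :=
  ∑ i ∈ Finset.range l.length, if (i + e) % 2 = 0 then l.getD i 0 else 0

lemma redSum_eq_parSum (l : List ℝ) : redSum l = parSum 0 l := by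
  simp [redSum, parSum]

@[simp] lemma parSum_nil (e : ℕ) : parSum e [] = 0 := by simp [parSum]

lemma parSum_cons (e : ℕ) (x : ℝ) (l : List ℝ) :
    parSum e (x :: l) = (if e % 2 = 0 then x else 0) + parSum (e + 1) l := by
  unfold parSum
  rw [List.length_cons, Finset.sum_range_succ']
  simp only [List.getD_cons_succ, List.getD_cons_zero, Nat.zero_add]
  rw [add_comm]
  congr 1
  apply Finset.sum_congr rfl
  intro i _
  congr 2
  omega

lemma parSum_congr {e e' : ℕ} (h : e % 2 = e' % 2) (l : List ℝ) :
    parSum e l = parSum e' l := by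
  unfold parSum
  apply Finset.sum_congr rfl
  intro i _
  have : (i + e) % 2 = (i + e') % 2 := by omega
  rw [this]

lemma parSum_append (e : ℕ) (X Y : List ℝ) :
    parSum e (X ++ Y) = parSum e X + parSum (e + X.length) Y := by
  induction X generalizing e with
  | nil => simp
  | cons x X ih =>
    simp only [List.cons_append, parSum_cons, ih (e+1), List.length_cons]
    have h : e + 1 + X.length = e + (X.length + 1) := by omega
    rw [h, add_assoc]

lemma parSum_nonneg (e : ℕ) {l : List ℝ} (h : ∀ x ∈ l, 0 ≤ x) : 0 ≤ parSum e l := by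
  induction l generalizing e with
  | nil => simp
  | cons x l ih =>
    rw [parSum_cons]
    have hx : 0 ≤ x := h x (by simp)
    have := ih (e+1) (fun y hy => h y (by simp [hy]))
    split <;> linarith

lemma redSum_nonneg {l : List ℝ} (h : ∀ x ∈ l, 0 ≤ x) : 0 ≤ redSum l := by
  rw [redSum_eq_parSum]; exact parSum_nonneg 0 h

lemma redSum_take_le {l : List ℝ} (h : ∀ x ∈ l, 0 ≤ x) (n : ℕ) :
    redSum (l.take n) ≤ redSum l := by
  conv_rhs => rw [← List.take_append_drop n l]
  rw [redSum_eq_parSum, redSum_eq_parSum, parSum_append]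
  have : 0 ≤ parSum (0 + (l.take n).length) (l.drop n) :=
    parSum_nonneg _ (fun x hx => h x (List.mem_of_mem_drop hx))
  linarith

lemma redSum_take_succ {l : List ℝ} {n : ℕ} (hn : n < l.length) :
    redSum (l.take (n+1)) = redSum (l.take n) + (if n % 2 = 0 then l.getD n 0 else 0) := by
  rw [redSum_eq_parSum, redSum_eq_parSum, List.take_succ]
  rw [parSum_append]
  congr 1
  · have h1 : l[n]? = some l[n] := List.getElem?_eq_getElem hn
    rw [h1]
    simp only [Option.toList_some, List.length_take]
    have hmin : min n l.length = n := by omega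
    rw [parSum_cons, parSum_nil]
    have : l.getD n 0 = l[n] := List.getD_eq_getElem l 0 hn
    simp [hmin, this, h1]

/-- One positive recolouring step. -/
def SRel (l m : List ℝ) : Prop :=
  (∀ x ∈ l, 0 < x) ∧ ∃ s : Step, s.Valid ∧ s.src = l ∧ s.tgt = m

lemma SRel.pos {l m : List ℝ} (h : SRel l m) : ∀ x ∈ l, 0 < x := h.1

lemma SRel.pos_tgt {l m : List ℝ} (h : SRel l m) : ∀ x ∈ m, 0 < x := by
  obtain ⟨hp, s, hv, hsrc, htgt⟩ := h
  subst hsrc htgt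
  intro x hx
  simp only [Step.tgt, List.mem_append, List.mem_cons] at hx
  have hpre : ∀ y ∈ s.pre, 0 < y := fun y hy => hp y (by simp [Step.src, hy])
  have hpost : ∀ y ∈ s.post, 0 < y := fun y hy => hp y (by simp [Step.src, hy])
  have ha : 0 < s.a := hp s.a (by simp [Step.src])
  have hb : 0 < s.b := hp s.b (by simp [Step.src])
  have hc : 0 < s.c := hp s.c (by simp [Step.src])
  rcases hx with hx | hx | hx
  · exact hpre x hx
  · subst hx; linarith
  · exact hpost x hx

lemma SRel.length {l m : List ℝ} (h : SRel l m) : m.length + 2 = l.length := by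
  obtain ⟨-, s, -, hsrc, htgt⟩ := h
  subst hsrc htgt
  simp [Step.src, Step.tgt]
  omega

lemma rtg_pos {l m : List ℝ} (h : Relation.ReflTransGen SRel l m) (hl : ∀ x ∈ l, 0 < x) :
    ∀ x ∈ m, 0 < x := by
  induction h with
  | refl => exact hl
  | tail _ hstep ih => exact hstep.pos_tgt

lemma rtg_len_mod {l m : List ℝ} (h : Relation.ReflTransGen SRel l m) :
    m.length % 2 = l.length % 2 := by
  induction h with
  | refl => rfl
  | tail _ hstep ih => have := hstep.length; omega

lemma reduces_to_rtg {l m : List ℝ} {st : List Step} (h : Reduces l st m)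
    (hl : ∀ x ∈ l, 0 < x) : Relation.ReflTransGen SRel l m := by
  induction h with
  | nil => exact Relation.ReflTransGen.refl
  | cons s hs hred ih =>
    have hstep : SRel s.src s.tgt := ⟨hl, s, hs, rfl, rfl⟩
    exact Relation.ReflTransGen.head hstep (ih hstep.pos_tgt)

lemma rtg_to_reduces {l m : List ℝ} (h : Relation.ReflTransGen SRel l m) :
    ∃ st : List Step, Reduces l st m := by
  induction h using Relation.ReflTransGen.head_induction_on with
  | refl => exact ⟨[], Reduces.nil m⟩
  | head hstep _ ih =>
    obtain ⟨st, hst⟩ := ih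
    obtain ⟨-, s, hv, hsrc, htgt⟩ := hstep
    subst hsrc
    exact ⟨s :: st, Reduces.cons s hv (htgt ▸ hst)⟩

lemma closed_rtg {l m : List ℝ} (h : Relation.ReflTransGen SRel l m)
    (hc : IsClosedConfig l) : l = m := by
  induction h using Relation.ReflTransGen.head_induction_on with
  | refl => rfl
  | head hstep _ _ =>
    obtain ⟨-, s, hv, hsrc, -⟩ := hstep
    exact absurd hsrc (hc s hv)

/-- Existence of a normal form. -/
lemma exists_nf (l : List ℝ) (hl : ∀ x ∈ l, 0 < x) :
    ∃ m, Relation.ReflTransGen SRel l m ∧ IsClosedConfig m := by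
  by_cases hc : IsClosedConfig l
  · exact ⟨l, Relation.ReflTransGen.refl, hc⟩
  · simp only [IsClosedConfig, not_forall] at hc
    obtain ⟨s, hv, hsrc⟩ := hc
    rw [not_not] at hsrc
    have hstep : SRel l s.tgt := ⟨hl, s, hv, hsrc, rfl⟩
    have hlen : s.tgt.length < l.length := by have := hstep.length; omega
    obtain ⟨m, hm, hmc⟩ := exists_nf s.tgt hstep.pos_tgt
    exact ⟨m, Relation.ReflTransGen.head hstep hm, hmc⟩
termination_by l.length

/-- Decomposition of two overlapping windows, first one not later than second. -/
lemma window_decomp : ∀ (P₁ P₂ : List ℝ) (a₁ b₁ c₁ a₂ b₂ c₂ : ℝ) (Q₁ Q₂ : List ℝ),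
    P₁.length ≤ P₂.length →
    P₁ ++ a₁ :: b₁ :: c₁ :: Q₁ = P₂ ++ a₂ :: b₂ :: c₂ :: Q₂ →
    (P₁ = P₂ ∧ a₁ = a₂ ∧ b₁ = b₂ ∧ c₁ = c₂ ∧ Q₁ = Q₂) ∨
    (P₂ = P₁ ++ [a₁] ∧ a₂ = b₁ ∧ b₂ = c₁ ∧ Q₁ = c₂ :: Q₂) ∨
    (P₂ = P₁ ++ [a₁, b₁] ∧ a₂ = c₁ ∧ Q₁ = b₂ :: c₂ :: Q₂) ∨
    (∃ E, P₂ = P₁ ++ a₁ :: b₁ :: c₁ :: E ∧ Q₁ = E ++ a₂ :: b₂ :: c₂ :: Q₂) := by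
  intro P₁
  induction P₁ with
  | nil =>
    intro P₂ a₁ b₁ c₁ a₂ b₂ c₂ Q₁ Q₂ _ h
    match P₂, h with
    | [], h => injection h with h1 h; injection h with h2 h; injection h with h3 h4
               exact Or.inl ⟨rfl, h1, h2, h3, h4⟩
    | [x], h => injection h with h1 h; injection h with h2 h; injection h with h3 h4
                subst h1 h2 h3 h4; exact Or.inr (Or.inl ⟨rfl, rfl, rfl, rfl⟩)
    | [x, y], h => injection h with h1 h; injection h with h2 h; injection h with h3 h4
                   subst h1 h2 h3 h4; exact Or.inr (Or.inr (Or.inl ⟨rfl, rfl, rfl⟩))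
    | x :: y :: z :: E, h =>
        injection h with h1 h; injection h with h2 h; injection h with h3 h4
        subst h1 h2 h3 h4
        exact Or.inr (Or.inr (Or.inr ⟨E, rfl, rfl⟩))
  | cons u P₁ ih =>
    intro P₂ a₁ b₁ c₁ a₂ b₂ c₂ Q₁ Q₂ hlen h
    match P₂, h with
    | [], h => simp at hlen
    | v :: P₂, h =>
      injection h with h1 h2
      subst h1
      simp only [List.length_cons, Nat.add_le_add_iff_right] at hlen
      rcases ih P₂ a₁ b₁ c₁ a₂ b₂ c₂ Q₁ Q₂ hlen h2 with
        ⟨rfl, h⟩ | ⟨rfl, h⟩ | ⟨rfl, h⟩ | ⟨E, rfl, h⟩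
      · exact Or.inl ⟨rfl, h⟩
      · exact Or.inr (Or.inl ⟨rfl, h⟩)
      · exact Or.inr (Or.inr (Or.inl ⟨rfl, h⟩))
      · exact Or.inr (Or.inr (Or.inr ⟨E, rfl, h⟩))

/-- Decomposition of a window against a marked-element decomposition. -/
lemma mid_decomp : ∀ (P A : List ℝ) (M a b c : ℝ) (D Q : List ℝ),
    A ++ M :: D = P ++ a :: b :: c :: Q →
    (∃ A', A = P ++ a :: b :: c :: A') ∨
    (A = P ++ [a, b] ∧ M = c ∧ D = Q) ∨
    (A = P ++ [a] ∧ M = b ∧ D = c :: Q) ∨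
    (A = P ∧ M = a ∧ D = b :: c :: Q) ∨
    (∃ D₁, P = A ++ M :: D₁ ∧ D = D₁ ++ a :: b :: c :: Q) := by
  intro P
  induction P with
  | nil =>
    intro A M a b c D Q h
    match A, h with
    | [], h =>
      injection h with h1 h2; subst h1 h2
      exact Or.inr (Or.inr (Or.inr (Or.inl ⟨rfl, rfl, rfl⟩)))
    | [x], h =>
      injection h with h1 h; injection h with h2 h3; subst h1 h2 h3
      exact Or.inr (Or.inr (Or.inl ⟨rfl, rfl, rfl⟩))
    | [x, y], h =>
      injection h with h1 h; injection h with h2 h; injection h with h3 h4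
      subst h1 h2 h3 h4
      exact Or.inr (Or.inl ⟨rfl, rfl, rfl⟩)
    | x :: y :: z :: A', h =>
      injection h with h1 h; injection h with h2 h; injection h with h3 h4
      subst h1 h2 h3
      exact Or.inl ⟨A', rfl⟩
  | cons p₀ P ih =>
    intro A M a b c D Q h
    match A, h with
    | [], h =>
      injection h with h1 h2; subst h1
      exact Or.inr (Or.inr (Or.inr (Or.inr ⟨P, rfl, h2⟩)))
    | x :: A', h =>
      injection h with h1 h2
      subst h1
      rcases ih A' M a b c D Q h2 with
        ⟨A'', rfl⟩ | ⟨rfl, h3⟩ | ⟨rfl, h3⟩ | ⟨rfl, h3⟩ | ⟨D₁, rfl, h3⟩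
      · exact Or.inl ⟨A'', rfl⟩
      · exact Or.inr (Or.inl ⟨rfl, h3⟩)
      · exact Or.inr (Or.inr (Or.inl ⟨rfl, h3⟩))
      · exact Or.inr (Or.inr (Or.inr (Or.inl ⟨rfl, h3⟩)))
      · exact Or.inr (Or.inr (Or.inr (Or.inr ⟨D₁, rfl, h3⟩)))

lemma SRel.mk' (P : List ℝ) (a b c : ℝ) (Q : List ℝ) (hv1 : b < a) (hv2 : b < c)
    (hpos : ∀ x ∈ P ++ a :: b :: c :: Q, 0 < x) :
    SRel (P ++ a :: b :: c :: Q) (P ++ (a + b + c) :: Q) :=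
  ⟨hpos, ⟨P, a, b, c, Q⟩, ⟨hv1, hv2⟩, rfl, rfl⟩

lemma cons_middle_congr {x y : ℝ} (P Q : List ℝ) (h : x = y) :
    P ++ x :: Q = P ++ y :: Q := by rw [h]

lemma join_of_le {l : List ℝ} (hpos : ∀ x ∈ l, 0 < x)
    (s₁ s₂ : Step) (hv₁ : s₁.Valid) (hv₂ : s₂.Valid)
    (h₁ : s₁.src = l) (h₂ : s₂.src = l) (hle : s₁.pre.length ≤ s₂.pre.length) :
    ∃ d, Relation.ReflGen SRel s₁.tgt d ∧ Relation.ReflGen SRel s₂.tgt d := by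
  obtain ⟨P₁, a₁, b₁, c₁, Q₁⟩ := s₁
  obtain ⟨P₂, a₂, b₂, c₂, Q₂⟩ := s₂
  simp only [Step.src, Step.tgt, Step.Valid] at *
  obtain ⟨hv₁a, hv₁c⟩ := hv₁
  obtain ⟨hv₂a, hv₂c⟩ := hv₂
  subst h₁
  have key := window_decomp P₁ P₂ a₁ b₁ c₁ a₂ b₂ c₂ Q₁ Q₂ hle h₂.symm
  have hmem : ∀ x ∈ P₁ ++ a₁ :: b₁ :: c₁ :: Q₁, 0 < x := hpos
  have ha₁ : 0 < a₁ := hmem a₁ (by simp)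
  have hb₁ : 0 < b₁ := hmem b₁ (by simp)
  have hc₁ : 0 < c₁ := hmem c₁ (by simp)
  rcases key with ⟨rfl, rfl, rfl, rfl, rfl⟩ | ⟨rfl, rfl, rfl, rfl⟩ |
    ⟨rfl, rfl, rfl⟩ | ⟨E, rfl, rfl⟩
  · exact ⟨P₁ ++ (a₁ + b₁ + c₁) :: Q₁, Relation.ReflGen.refl, Relation.ReflGen.refl⟩
  · -- overlap by two: contradiction
    exact absurd hv₁c (not_lt.mpr hv₂a.le)
  · -- adjacent windows sharing the interval c₁ = a₂
    have hb₂ : 0 < b₂ := hmem b₂ (by simp)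
    have hc₂ : 0 < c₂ := hmem c₂ (by simp)
    have hQ₂ : ∀ x ∈ Q₂, 0 < x := fun x hx => hmem x (by simp [hx])
    have hP₁ : ∀ x ∈ P₁, 0 < x := fun x hx => hmem x (by simp [hx])
    refine ⟨P₁ ++ (a₁ + b₁ + a₂ + b₂ + c₂) :: Q₂, ?_, ?_⟩
    · apply Relation.ReflGen.single
      have hs : SRel (P₁ ++ (a₁ + b₁ + a₂) :: b₂ :: c₂ :: Q₂)
          (P₁ ++ ((a₁ + b₁ + a₂) + b₂ + c₂) :: Q₂) := by
        apply SRel.mk' P₁ _ b₂ c₂ Q₂ (by linarith) hv₂c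
        intro x hx
        simp only [List.mem_append, List.mem_cons] at hx
        rcases hx with hx | rfl | rfl | rfl | hx
        · exact hP₁ x hx
        · linarith
        · exact hb₂
        · exact hc₂
        · exact hQ₂ x hx
      have e1 : (a₁ + b₁ + a₂) + b₂ + c₂ = a₁ + b₁ + a₂ + b₂ + c₂ := by ring
      rwa [cons_middle_congr _ _ e1] at hs
    · apply Relation.ReflGen.single
      have hs : SRel (P₁ ++ a₁ :: b₁ :: (a₂ + b₂ + c₂) :: Q₂)
          (P₁ ++ (a₁ + b₁ + (a₂ + b₂ + c₂)) :: Q₂) := by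
        apply SRel.mk' P₁ a₁ b₁ _ Q₂ hv₁a (by linarith)
        intro x hx
        simp only [List.mem_append, List.mem_cons] at hx
        rcases hx with hx | rfl | rfl | rfl | hx
        · exact hP₁ x hx
        · exact ha₁
        · exact hb₁
        · linarith
        · exact hQ₂ x hx
      have e1 : a₁ + b₁ + (a₂ + b₂ + c₂) = a₁ + b₁ + a₂ + b₂ + c₂ := by ring
      rw [cons_middle_congr _ _ e1] at hs
      have e2 : (P₁ ++ [a₁, b₁]) ++ (a₂ + b₂ + c₂) :: Q₂
          = P₁ ++ a₁ :: b₁ :: (a₂ + b₂ + c₂) :: Q₂ := by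
        simp
      rwa [e2]
  · -- disjoint windows
    have ha₂ : 0 < a₂ := hmem a₂ (by simp)
    have hb₂ : 0 < b₂ := hmem b₂ (by simp)
    have hc₂ : 0 < c₂ := hmem c₂ (by simp)
    have hQ₂ : ∀ x ∈ Q₂, 0 < x := fun x hx => hmem x (by simp [hx])
    have hP₁ : ∀ x ∈ P₁, 0 < x := fun x hx => hmem x (by simp [hx])
    have hE : ∀ x ∈ E, 0 < x := fun x hx => hmem x (by simp [hx])
    refine ⟨P₁ ++ (a₁ + b₁ + c₁) :: (E ++ (a₂ + b₂ + c₂) :: Q₂), ?_, ?_⟩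
    · apply Relation.ReflGen.single
      have hs : SRel ((P₁ ++ (a₁ + b₁ + c₁) :: E) ++ a₂ :: b₂ :: c₂ :: Q₂)
          ((P₁ ++ (a₁ + b₁ + c₁) :: E) ++ (a₂ + b₂ + c₂) :: Q₂) := by
        apply SRel.mk' _ _ _ _ _ hv₂a hv₂c
        intro x hx
        simp only [List.mem_append, List.mem_cons] at hx
        rcases hx with ⟨hx | rfl | hx⟩ | rfl | rfl | rfl | hx
        · exact hP₁ x hx
        · linarith
        · exact hE x hx
        · exact ha₂
        · exact hb₂
        · exact hc₂
        · exact hQ₂ x hx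
      simpa only [List.append_assoc, List.cons_append, List.nil_append] using hs
    · apply Relation.ReflGen.single
      have hs : SRel (P₁ ++ a₁ :: b₁ :: c₁ :: (E ++ (a₂ + b₂ + c₂) :: Q₂))
          (P₁ ++ (a₁ + b₁ + c₁) :: (E ++ (a₂ + b₂ + c₂) :: Q₂)) := by
        apply SRel.mk' _ _ _ _ _ hv₁a hv₁c
        intro x hx
        simp only [List.mem_append, List.mem_cons] at hx
        rcases hx with hx | rfl | rfl | rfl | hx | rfl | hx
        · exact hP₁ x hx
        · exact ha₁
        · exact hb₁
        · exact hc₁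
        · exact hE x hx
        · linarith
        · exact hQ₂ x hx
      simpa only [List.append_assoc, List.cons_append, List.nil_append] using hs

lemma diamond : ∀ a b c : List ℝ, SRel a b → SRel a c →
    ∃ d, Relation.ReflGen SRel b d ∧ Relation.ReflTransGen SRel c d := by
  intro a b c h1 h2
  obtain ⟨hpos, s₁, hv₁, hsrc₁, htgt₁⟩ := h1
  obtain ⟨-, s₂, hv₂, hsrc₂, htgt₂⟩ := h2
  subst htgt₁ htgt₂
  rcases le_total s₁.pre.length s₂.pre.length with hle | hle
  · obtain ⟨d, hd₁, hd₂⟩ := join_of_le hpos s₁ s₂ hv₁ hv₂ hsrc₁ hsrc₂ hle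
    exact ⟨d, hd₁, hd₂.to_reflTransGen⟩
  · obtain ⟨d, hd₂, hd₁⟩ := join_of_le hpos s₂ s₁ hv₂ hv₁ hsrc₂ hsrc₁ hle
    exact ⟨d, hd₁, hd₂.to_reflTransGen⟩

/-- Uniqueness of the normal form. -/
lemma nf_unique {l m₁ m₂ : List ℝ} (h₁ : Relation.ReflTransGen SRel l m₁)
    (h₂ : Relation.ReflTransGen SRel l m₂)
    (hc₁ : IsClosedConfig m₁) (hc₂ : IsClosedConfig m₂) : m₁ = m₂ := by
  obtain ⟨d, hd₁, hd₂⟩ := Relation.church_rosser diamond h₁ h₂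
  rw [closed_rtg hd₁ hc₁, closed_rtg hd₂ hc₂]

lemma take_succ_eq {l : List ℝ} {n : ℕ} (h : n < l.length) :
    l.take (n+1) = l.take n ++ [l[n]'h] := by
  rw [List.take_succ, List.getElem?_eq_getElem h]
  simp

/-- Invariant for the two-block analysis. -/
def Good (Cm Cp : List ℝ) (l : List ℝ) : Prop :=
  ∃ i j M, i ≤ Cm.length ∧ j ≤ Cp.length ∧ (i + j) % 2 = 1 ∧
    l = Cm.take i ++ M :: Cp.drop j ∧
    (i % 2 = 0 → M ≤ 2 * (redSum Cm - redSum (Cm.take i)) + 2 * redSum (Cp.take j))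

lemma good_step {Cm Cp : List ℝ} (hposm : ∀ x ∈ Cm, 0 < x) (hposp : ∀ x ∈ Cp, 0 < x)
    (hclm : IsClosedConfig Cm) (hclp : IsClosedConfig Cp)
    {l m : List ℝ} (hg : Good Cm Cp l) (hs : SRel l m) : Good Cm Cp m := by
  obtain ⟨i, j, M, hi, hj, hpar, rfl, hinv⟩ := hg
  obtain ⟨hpos, s, ⟨hva, hvc⟩, hsrc, rfl⟩ := hs
  obtain ⟨P, a, b, c, Q⟩ := s
  simp only [Step.src, Step.tgt] at *
  have key := mid_decomp P (Cm.take i) M a b c (Cp.drop j) Q hsrc.symm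
  have hRm : redSum (Cm.take i) ≤ redSum Cm :=
    redSum_take_le (fun x hx => (hposm x hx).le) i
  have hSp : 0 ≤ redSum (Cp.take j) :=
    redSum_nonneg (fun x hx => (hposp x (List.take_subset _ _ hx)).le)
  rcases key with ⟨A', hA⟩ | ⟨hA, rfl, hD⟩ | ⟨hA, rfl, hD⟩ | ⟨hA, rfl, hD⟩ | ⟨D₁, hP, hD⟩
  · -- window inside Cm : contradiction with Cm closed
    exfalso
    apply hclm ⟨P, a, b, c, A' ++ Cm.drop i⟩ ⟨hva, hvc⟩
    show P ++ a :: b :: c :: (A' ++ Cm.drop i) = Cm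
    calc P ++ a :: b :: c :: (A' ++ Cm.drop i)
        = (P ++ a :: b :: c :: A') ++ Cm.drop i := by simp
      _ = Cm.take i ++ Cm.drop i := by rw [hA]
      _ = Cm := List.take_append_drop i Cm
  · -- left eat
    have hlenA : i = P.length + 2 := by
      have := congrArg List.length hA
      simp only [List.length_take, List.length_append, List.length_cons,
        List.length_nil] at this
      omega
    obtain ⟨i', rfl⟩ : ∃ i', i = i' + 2 := ⟨P.length, by omega⟩
    have h1lt : i' < Cm.length := by omega
    have h2lt : i' + 1 < Cm.length := by omega
    have htk : Cm.take (i'+2) = Cm.take i' ++ [Cm[i']'h1lt, Cm[i'+1]'h2lt] := by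
      rw [show i'+2 = (i'+1)+1 from rfl, take_succ_eq h2lt, take_succ_eq h1lt,
        List.append_assoc]
      rfl
    rw [htk] at hA
    have hlen : (Cm.take i').length = P.length := by
      simp only [List.length_take]; omega
    obtain ⟨hPt, hq⟩ := List.append_inj hA hlen
    injection hq with q1 hq
    injection hq with q2 _
    refine ⟨i', j, a + b + M, by omega, hj, by omega, ?_, ?_⟩
    · rw [hD, ← hPt]
    · intro hi2e
      have hie : (i' + 2) % 2 = 0 := by omega
      have hM := hinv hie
      have e1 : redSum (Cm.take (i'+1)) = redSum (Cm.take i') +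
          (if i' % 2 = 0 then Cm.getD i' 0 else 0) := redSum_take_succ h1lt
      have e2 : redSum (Cm.take (i'+2)) = redSum (Cm.take (i'+1)) +
          (if (i'+1) % 2 = 0 then Cm.getD (i'+1) 0 else 0) := redSum_take_succ h2lt
      rw [if_pos hi2e, List.getD_eq_getElem _ _ h1lt, q1] at e1
      rw [if_neg (by omega), add_zero] at e2
      have hba : b < a := hva
      linarith
  · -- middle merge
    have hlenA : i = P.length + 1 := by
      have := congrArg List.length hA
      simp only [List.length_take, List.length_append, List.length_cons,
        List.length_nil] at this
      omega
    obtain ⟨i', rfl⟩ : ∃ i', i = i' + 1 := ⟨P.length, by omega⟩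
    have h1lt : i' < Cm.length := by omega
    have htk : Cm.take (i'+1) = Cm.take i' ++ [Cm[i']'h1lt] := take_succ_eq h1lt
    rw [htk] at hA
    have hlen : (Cm.take i').length = P.length := by
      simp only [List.length_take]; omega
    obtain ⟨hPt, hq⟩ := List.append_inj hA hlen
    injection hq with q1 _
    -- right side
    have hjlt : j < Cp.length := by
      by_contra hcon
      have hnil : Cp.drop j = [] := List.drop_eq_nil_of_le (by omega)
      rw [hnil] at hD
      exact List.cons_ne_nil _ _ hD.symm
    have hdj : Cp.drop j = Cp[j]'hjlt :: Cp.drop (j+1) := List.drop_eq_getElem_cons hjlt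
    rw [hD] at hdj
    injection hdj with r1 r2
    refine ⟨i', j + 1, a + M + c, by omega, by omega, by omega, ?_, ?_⟩
    · rw [← hPt, ← r2]
    · intro hi1e
      have hje : j % 2 = 0 := by omega
      have e1 : redSum (Cm.take (i'+1)) = redSum (Cm.take i') +
          (if i' % 2 = 0 then Cm.getD i' 0 else 0) := redSum_take_succ h1lt
      rw [if_pos hi1e, List.getD_eq_getElem _ _ h1lt, q1] at e1
      have e2 : redSum (Cp.take (j+1)) = redSum (Cp.take j) +
          (if j % 2 = 0 then Cp.getD j 0 else 0) := redSum_take_succ hjlt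
      rw [if_pos hje, List.getD_eq_getElem _ _ hjlt, ← r1] at e2
      have hcpos : 0 < c := by rw [r1]; exact hposp _ (List.getElem_mem _)
      have hMa : M < a := hva
      linarith
  · -- right eat
    have hj2 : j + 1 < Cp.length := by
      by_contra hcon
      have h1 : (Cp.drop j).length = Cp.length - j := List.length_drop
      rw [hD] at h1
      simp at h1
      omega
    have hjlt : j < Cp.length := by omega
    have hdj : Cp.drop j = Cp[j]'hjlt :: Cp.drop (j+1) := List.drop_eq_getElem_cons hjlt
    have hdj1 : Cp.drop (j+1) = Cp[j+1]'hj2 :: Cp.drop (j+2) := List.drop_eq_getElem_cons hj2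
    rw [hD, hdj1] at hdj
    injection hdj with r1 r2
    injection r2 with r3 r4
    refine ⟨i, j + 2, M + b + c, hi, by omega, by omega, ?_, ?_⟩
    · rw [hA, ← r4]
    · intro hie
      have hje : j % 2 = 1 := by omega
      have hM := hinv hie
      have e1 : redSum (Cp.take (j+1)) = redSum (Cp.take j) +
          (if j % 2 = 0 then Cp.getD j 0 else 0) := redSum_take_succ hjlt
      have e2 : redSum (Cp.take (j+2)) = redSum (Cp.take (j+1)) +
          (if (j+1) % 2 = 0 then Cp.getD (j+1) 0 else 0) := redSum_take_succ hj2
      rw [if_neg (by omega), add_zero] at e1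
      rw [if_pos (by omega), List.getD_eq_getElem _ _ hj2, ← r3] at e2
      have hbc : b < c := hvc
      linarith
  · -- window inside Cp : contradiction with Cp closed
    exfalso
    apply hclp ⟨Cp.take j ++ D₁, a, b, c, Q⟩ ⟨hva, hvc⟩
    show (Cp.take j ++ D₁) ++ a :: b :: c :: Q = Cp
    calc (Cp.take j ++ D₁) ++ a :: b :: c :: Q
        = Cp.take j ++ (D₁ ++ a :: b :: c :: Q) := by simp
      _ = Cp.take j ++ Cp.drop j := by rw [← hD]
      _ = Cp := List.take_append_drop j Cp

lemma good_redSum {Cm Cp : List ℝ} (hposm : ∀ x ∈ Cm, 0 < x) (hposp : ∀ x ∈ Cp, 0 < x)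
    {l : List ℝ} (hl : Good Cm Cp l) : redSum l ≤ 2 * redSum Cm + 2 * redSum Cp := by
  obtain ⟨i, j, M, hi, hj, hpar, rfl, hinv⟩ := hl
  have hT0 : 0 ≤ redSum (Cm.take i) :=
    redSum_nonneg (fun x hx => (hposm x (List.take_subset _ _ hx)).le)
  have hTle : redSum (Cm.take i) ≤ redSum Cm :=
    redSum_take_le (fun x hx => (hposm x hx).le) i
  have hS0 : 0 ≤ redSum (Cp.take j) :=
    redSum_nonneg (fun x hx => (hposp x (List.take_subset _ _ hx)).le)
  have hSle : redSum (Cp.take j) ≤ redSum Cp :=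
    redSum_take_le (fun x hx => (hposp x hx).le) j
  have hRp0 : 0 ≤ redSum Cp := redSum_nonneg (fun x hx => (hposp x hx).le)
  have hRm0 : 0 ≤ redSum Cm := redSum_nonneg (fun x hx => (hposm x hx).le)
  have hlen : (Cm.take i).length = i := by simp [List.length_take]; omega
  have hsplit : redSum (Cm.take i ++ M :: Cp.drop j)
      = redSum (Cm.take i) + (if i % 2 = 0 then M else 0) + parSum (i+1) (Cp.drop j) := by
    rw [redSum_eq_parSum, parSum_append, parSum_cons, hlen, redSum_eq_parSum]
    simp only [Nat.zero_add]
    ring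
  have hdrop : parSum (i+1) (Cp.drop j) = redSum Cp - redSum (Cp.take j) := by
    have h1 : redSum Cp = redSum (Cp.take j) + parSum j (Cp.drop j) := by
      conv_lhs => rw [← List.take_append_drop j Cp]
      rw [redSum_eq_parSum, parSum_append, redSum_eq_parSum]
      congr 1
      apply parSum_congr
      simp [List.length_take]
      omega
    have h2 : parSum (i+1) (Cp.drop j) = parSum j (Cp.drop j) :=
      parSum_congr (by omega) _
    rw [h2]
    linarith
  rw [hsplit, hdrop]
  rcases Nat.even_or_odd i with hie | hie
  · have hie' : i % 2 = 0 := Nat.even_iff.mp hie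
    have hM := hinv hie'
    rw [if_pos hie']
    linarith
  · have hie' : ¬ (i % 2 = 0) := by
      have := Nat.odd_iff.mp hie; omega
    rw [if_neg hie']
    linarith

lemma good_init {Cm Cp : List ℝ} {B : ℝ} (hlm : Cm.length % 2 = 1) :
    Good Cm Cp (Cm ++ B :: Cp) := by
  refine ⟨Cm.length, 0, B, le_rfl, Nat.zero_le _, by omega, by simp, by omega⟩

lemma twoBlock {Cm Cp : List ℝ} {B : ℝ} (hposm : ∀ x ∈ Cm, 0 < x)
    (hposp : ∀ x ∈ Cp, 0 < x) (hB : 0 < B)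
    (hclm : IsClosedConfig Cm) (hclp : IsClosedConfig Cp)
    (hlm : Cm.length % 2 = 1) {m : List ℝ}
    (h : Relation.ReflTransGen SRel (Cm ++ B :: Cp) m) :
    redSum m ≤ 2 * redSum Cm + 2 * redSum Cp := by
  have hg : Good Cm Cp m := by
    induction h with
    | refl => exact good_init hlm
    | tail _ hstep ih => exact good_step hposm hposp hclm hclp ih hstep
  exact good_redSum hposm hposp hg

/-- Lifting a reduction into a larger configuration. -/
lemma rtg_append {l m : List ℝ} (X Z : List ℝ)
    (h : Relation.ReflTransGen SRel l m)
    (hX : ∀ x ∈ X, 0 < x) (hZ : ∀ x ∈ Z, 0 < x) :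
    Relation.ReflTransGen SRel (X ++ l ++ Z) (X ++ m ++ Z) := by
  induction h with
  | refl => exact Relation.ReflTransGen.refl
  | @tail u v huv hstep ih =>
    refine Relation.ReflTransGen.tail ih ?_
    obtain ⟨hpos, s, hv, hsrc, htgt⟩ := hstep
    refine ⟨?_, ⟨X ++ s.pre, s.a, s.b, s.c, s.post ++ Z⟩, hv, ?_, ?_⟩
    · intro x hx
      simp only [List.append_assoc, List.mem_append] at hx
      rcases hx with hx | hx | hx
      · exact hX x hx
      · exact hpos x (by simp [hx])
      · exact hZ x hx
    · show (X ++ s.pre) ++ s.a :: s.b :: s.c :: (s.post ++ Z) = X ++ u ++ Z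
      rw [← hsrc]
      simp [Step.src]
    · show (X ++ s.pre) ++ (s.a + s.b + s.c) :: (s.post ++ Z) = X ++ v ++ Z
      rw [← htgt]
      simp [Step.tgt]

lemma interleave_pos : ∀ (cs : List (List ℝ)) (bs : List ℝ),
    (∀ c ∈ cs, ∀ x ∈ c, 0 < x) → (∀ x ∈ bs, 0 < x) →
    ∀ x ∈ interleave cs bs, 0 < x := by
  intro cs
  induction cs with
  | nil => intro bs _ _ x hx; simp [interleave] at hx
  | cons c cs ih =>
    intro bs hc hb x hx
    cases bs with
    | nil =>
      simp only [interleave] at hx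
      exact hc c (by simp) x hx
    | cons b bs =>
      simp only [interleave, List.mem_append, List.mem_cons] at hx
      rcases hx with hx | rfl | hx
      · exact hc c (by simp) x hx
      · exact hb x (by simp)
      · exact ih bs (fun c' hc' => hc c' (by simp [hc'])) (fun y hy => hb y (by simp [hy])) x hx

lemma interleave_len_odd : ∀ (bs : List ℝ) (cs : List (List ℝ)),
    cs.length = bs.length + 1 → (∀ c ∈ cs, c.length % 2 = 1) →
    (interleave cs bs).length % 2 = 1 := by
  intro bs
  induction bs with
  | nil =>
    intro cs hlen hodd
    match cs with
    | [c] => simpa [interleave] using hodd c (by simp)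
  | cons b bs ih =>
    intro cs hlen hodd
    match cs with
    | c :: cs =>
      simp only [List.length_cons] at hlen
      have := ih cs (by omega) (fun c' hc' => hodd c' (by simp [hc']))
      have hco := hodd c (by simp)
      simp only [interleave, List.length_append, List.length_cons]
      omega

lemma interleave_append : ∀ (bs₁ : List ℝ) (cs₁ cs₂ : List (List ℝ)) (bs₂ : List ℝ) (b : ℝ),
    cs₁.length = bs₁.length + 1 →
    interleave (cs₁ ++ cs₂) (bs₁ ++ b :: bs₂) = interleave cs₁ bs₁ ++ b :: interleave cs₂ bs₂ := by
  intro bs₁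
  induction bs₁ with
  | nil =>
    intro cs₁ cs₂ bs₂ b hlen
    match cs₁ with
    | [c] => simp [interleave]
  | cons b₁ bs₁ ih =>
    intro cs₁ cs₂ bs₂ b hlen
    match cs₁ with
    | c :: cs₁ =>
      simp only [List.length_cons] at hlen
      have := ih cs₁ cs₂ bs₂ b (by omega)
      simp only [List.cons_append, interleave, List.append_eq]
      rw [this]
      simp

lemma forall₂_pos {cs ms : List (List ℝ)}
    (h : List.Forall₂ (fun c mc => Relation.ReflTransGen SRel c mc ∧ IsClosedConfig mc) cs ms)
    (hpos : ∀ c ∈ cs, ∀ x ∈ c, 0 < x) : ∀ mc ∈ ms, ∀ x ∈ mc, 0 < x := by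
  induction h with
  | nil => simp
  | cons hcm hrest ih =>
    intro mc hmc
    rcases List.mem_cons.1 hmc with rfl | hmc
    · exact rtg_pos hcm.1 (hpos _ (by simp))
    · exact ih (fun c hc => hpos c (by simp [hc])) mc hmc

lemma main : ∀ k : ℕ, 1 ≤ k → ∀ (cs : List (List ℝ)) (bs : List ℝ) (ms : List (List ℝ)) (m : List ℝ),
    cs.length = k → bs.length + 1 = k →
    (∀ c ∈ cs, c.length % 2 = 1) → (∀ c ∈ cs, ∀ x ∈ c, 0 < x) → (∀ x ∈ bs, 0 < x) →
    List.Forall₂ (fun c mc => Relation.ReflTransGen SRel c mc ∧ IsClosedConfig mc) cs ms →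
    Relation.ReflTransGen SRel (interleave cs bs) m → IsClosedConfig m →
    redSum m ≤ 2 ^ Nat.clog 2 k * (ms.map redSum).sum := by
  intro k
  induction k using Nat.strong_induction_on with
  | _ k IH =>
    intro hk cs bs ms m hcs hbs hodd hposc hposb hms h hc
    rcases eq_or_lt_of_le hk with hk1 | hk2
    · -- k = 1
      subst hcs
      obtain ⟨c, rfl⟩ := List.length_eq_one_iff.mp (by omega : cs.length = 1)
      have hbs0 : bs = [] := List.length_eq_zero_iff.mp (by omega)
      subst hbs0
      rcases hms with _ | ⟨⟨hrtg, hmc⟩, hms'⟩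
      cases hms'
      have hI : interleave [c] [] = c := rfl
      rw [hI] at h
      have hposcc : ∀ x ∈ c, 0 < x := hposc c (by simp)
      have hm : m = _ := nf_unique h hrtg hc hmc
      subst hm
      simp only [← hk1, Nat.clog_one_right, pow_zero, List.map_cons, List.map_nil,
        List.sum_cons, List.sum_nil, one_mul, add_zero, le_refl]
    · -- k ≥ 2
      have hk2' : 2 ≤ k := hk2
      set k₁ := (k + 1) / 2 with hk₁def
      set k₂ := k - k₁ with hk₂def
      have hk₁1 : 1 ≤ k₁ := by omega
      have hk₂1 : 1 ≤ k₂ := by omega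
      have hk₁lt : k₁ < k := by omega
      have hk₂lt : k₂ < k := by omega
      have hk₂le : k₂ ≤ k₁ := by omega
      -- split the data
      set cs₁ := cs.take k₁ with hcs₁
      set cs₂ := cs.drop k₁ with hcs₂
      set bs₁ := bs.take (k₁ - 1) with hbs₁
      have hbslen : bs.length = k - 1 := by omega
      have hrest : bs.drop (k₁ - 1) ≠ [] := by
        intro hnil
        have := congrArg List.length hnil
        simp only [List.length_drop, List.length_nil] at this
        omega
      obtain ⟨B, bs₂, hBbs₂⟩ := List.exists_cons_of_ne_nil hrest
      have hbssplit : bs = bs₁ ++ B :: bs₂ := by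
        conv_lhs => rw [← List.take_append_drop (k₁ - 1) bs]
        rw [hBbs₂]
      have hcssplit : cs = cs₁ ++ cs₂ := (List.take_append_drop k₁ cs).symm
      have hlcs₁ : cs₁.length = k₁ := by simp [hcs₁, List.length_take]; omega
      have hlcs₂ : cs₂.length = k₂ := by simp [hcs₂, List.length_drop]; omega
      have hlbs₁ : bs₁.length = k₁ - 1 := by simp [hbs₁, List.length_take]; omega
      have hlbs₂ : bs₂.length = k₂ - 1 := by
        have := congrArg List.length hBbs₂
        simp only [List.length_drop, List.length_cons] at this
        omega
      set L₁ := interleave cs₁ bs₁ with hL₁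
      set L₂ := interleave cs₂ bs₂ with hL₂
      have hsplit : interleave cs bs = L₁ ++ B :: L₂ := by
        conv_lhs => rw [hcssplit, hbssplit]
        exact interleave_append bs₁ cs₁ cs₂ bs₂ B (by omega)
      -- positivity
      have hposc₁ : ∀ c ∈ cs₁, ∀ x ∈ c, 0 < x := fun c hcm => hposc c (List.take_subset _ _ hcm)
      have hposc₂ : ∀ c ∈ cs₂, ∀ x ∈ c, 0 < x := fun c hcm => hposc c (List.drop_subset _ _ hcm)
      have hposb₁ : ∀ x ∈ bs₁, 0 < x := fun x hx => hposb x (List.take_subset _ _ hx)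
      have hposb₂ : ∀ x ∈ bs₂, 0 < x := fun x hx => hposb x (by
        rw [hbssplit]; simp [hx])
      have hposB : 0 < B := hposb B (by rw [hbssplit]; simp)
      have hodd₁ : ∀ c ∈ cs₁, c.length % 2 = 1 := fun c hcm => hodd c (List.take_subset _ _ hcm)
      have hodd₂ : ∀ c ∈ cs₂, c.length % 2 = 1 := fun c hcm => hodd c (List.drop_subset _ _ hcm)
      have hposL₁ : ∀ x ∈ L₁, 0 < x := interleave_pos cs₁ bs₁ hposc₁ hposb₁
      have hposL₂ : ∀ x ∈ L₂, 0 < x := interleave_pos cs₂ bs₂ hposc₂ hposb₂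
      -- normal forms of the halves
      obtain ⟨N₁, hN₁, hN₁c⟩ := exists_nf L₁ hposL₁
      obtain ⟨N₂, hN₂, hN₂c⟩ := exists_nf L₂ hposL₂
      have hposN₁ : ∀ x ∈ N₁, 0 < x := rtg_pos hN₁ hposL₁
      have hposN₂ : ∀ x ∈ N₂, 0 < x := rtg_pos hN₂ hposL₂
      -- IH bounds
      set ms₁ := ms.take k₁ with hms₁
      set ms₂ := ms.drop k₁ with hms₂
      have hmss : List.Forall₂ _ cs₁ ms₁ := List.forall₂_take k₁ hms
      have hmss₂ : List.Forall₂ _ cs₂ ms₂ := List.forall₂_drop k₁ hms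
      have hIH₁ := IH k₁ hk₁lt hk₁1 cs₁ bs₁ ms₁ N₁ hlcs₁ (by omega) hodd₁ hposc₁ hposb₁
        hmss hN₁ hN₁c
      have hIH₂ := IH k₂ hk₂lt hk₂1 cs₂ bs₂ ms₂ N₂ hlcs₂ (by omega) hodd₂ hposc₂ hposb₂
        hmss₂ hN₂ hN₂c
      -- lift the reductions
      have step1 : Relation.ReflTransGen SRel (L₁ ++ B :: L₂) (N₁ ++ B :: L₂) := by
        have := rtg_append [] (B :: L₂) hN₁ (by simp)
          (fun x hx => by rcases List.mem_cons.1 hx with rfl | hx; exacts [hposB, hposL₂ x hx])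
        simpa using this
      have step2 : Relation.ReflTransGen SRel (N₁ ++ B :: L₂) (N₁ ++ B :: N₂) := by
        have := rtg_append (N₁ ++ [B]) [] hN₂ (fun x hx => by
          rcases List.mem_append.1 hx with hx | hx
          · exact hposN₁ x hx
          · rcases List.mem_singleton.1 hx with rfl; exact hposB) (by simp)
        simpa [List.append_assoc] using this
      have hwhole : Relation.ReflTransGen SRel (interleave cs bs) (N₁ ++ B :: N₂) := by
        rw [hsplit]; exact step1.trans step2
      have hposNB : ∀ x ∈ N₁ ++ B :: N₂, 0 < x := by
        intro x hx
        rcases List.mem_append.1 hx with hx | hx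
        · exact hposN₁ x hx
        · rcases List.mem_cons.1 hx with rfl | hx
          exacts [hposB, hposN₂ x hx]
      obtain ⟨m', hm', hm'c⟩ := exists_nf (N₁ ++ B :: N₂) hposNB
      have hmm : m = m' := nf_unique h (hwhole.trans hm') hc hm'c
      -- two-block inequality
      have hlodd : N₁.length % 2 = 1 := by
        have h1 := rtg_len_mod hN₁
        have h2 : L₁.length % 2 = 1 := interleave_len_odd bs₁ cs₁ (by omega) hodd₁
        omega
      have htb : redSum m' ≤ 2 * redSum N₁ + 2 * redSum N₂ :=
        twoBlock hposN₁ hposN₂ hposB hN₁c hN₂c hlodd hm'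
      -- assemble
      have hmssum : (ms.map redSum).sum = (ms₁.map redSum).sum + (ms₂.map redSum).sum := by
        conv_lhs => rw [← List.take_append_drop k₁ ms]
        rw [List.map_append, List.sum_append]
      have hposms : ∀ mc ∈ ms, ∀ x ∈ mc, 0 < x := forall₂_pos hms hposc
      have hS₁ : 0 ≤ (ms₁.map redSum).sum := by
        apply List.sum_nonneg
        intro x hx
        obtain ⟨mc, hmc, rfl⟩ := List.mem_map.1 hx
        exact redSum_nonneg (fun y hy => (hposms mc (List.take_subset _ _ hmc) y hy).le)
      have hS₂ : 0 ≤ (ms₂.map redSum).sum := by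
        apply List.sum_nonneg
        intro x hx
        obtain ⟨mc, hmc, rfl⟩ := List.mem_map.1 hx
        exact redSum_nonneg (fun y hy => (hposms mc (List.drop_subset _ _ hmc) y hy).le)
      have hclog : Nat.clog 2 k = Nat.clog 2 k₁ + 1 := by
        rw [Nat.clog_of_two_le one_lt_two hk2']
        congr 1
      have hclog₂ : Nat.clog 2 k₂ ≤ Nat.clog 2 k₁ := Nat.clog_mono_right 2 hk₂le
      set c₁ := Nat.clog 2 k₁
      set c₂ := Nat.clog 2 k₂
      have e1 : (2:ℝ) ^ Nat.clog 2 k = 2 * 2 ^ c₁ := by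
        rw [hclog, pow_succ]; ring
      have e2 : (2:ℝ) * 2 ^ c₂ ≤ 2 ^ Nat.clog 2 k := by
        rw [hclog]
        calc (2:ℝ) * 2 ^ c₂ = 2 ^ (c₂ + 1) := by rw [pow_succ]; ring
          _ ≤ 2 ^ (c₁ + 1) := by
              apply pow_le_pow_right₀ (by norm_num)
              omega
      have p1 : 2 * redSum N₁ ≤ (2 * 2 ^ c₁) * (ms₁.map redSum).sum := by
        rw [mul_assoc]; linarith
      have p2 : 2 * redSum N₂ ≤ (2 * 2 ^ c₂) * (ms₂.map redSum).sum := by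
        rw [mul_assoc]; linarith
      have p3 : (2 * 2 ^ c₂) * (ms₂.map redSum).sum ≤ 2 ^ Nat.clog 2 k * (ms₂.map redSum).sum :=
        mul_le_mul_of_nonneg_right e2 hS₂
      have p4 : (2 * 2 ^ c₁) * (ms₁.map redSum).sum = 2 ^ Nat.clog 2 k * (ms₁.map redSum).sum := by
        rw [e1]
      have expand : (2:ℝ) ^ Nat.clog 2 k * ((ms₁.map redSum).sum + (ms₂.map redSum).sum)
          = 2 ^ Nat.clog 2 k * (ms₁.map redSum).sum + 2 ^ Nat.clog 2 k * (ms₂.map redSum).sum :=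
        mul_add _ _ _
      rw [hmm, hmssum, expand]
      linarith


lemma forall₂_conv {cs ms : List (List ℝ)}
    (h : List.Forall₂ (fun c mc => ∃ sc : List Step, Reduces c sc mc ∧ IsClosedConfig mc) cs ms)
    (hpos : ∀ c ∈ cs, ∀ x ∈ c, 0 < x) :
    List.Forall₂ (fun c mc => Relation.ReflTransGen SRel c mc ∧ IsClosedConfig mc) cs ms := by
  induction h with
  | nil => exact List.Forall₂.nil
  | cons hcm hrest ih =>
    obtain ⟨sc, hr, hcl⟩ := hcm
    exact List.Forall₂.cons ⟨reduces_to_rtg hr (hpos _ (by simp)), hcl⟩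
      (ih (fun c hc => hpos c (by simp [hc])))

end RedBlueAux

/-- If `C₁, …, C_k` are red-ended coloured-intervals and
`B₁, …, B_{k-1}` are blue intervals, then
`r(C₁ + B₁ + C₂ + … + B_{k-1} + C_k) ≤ 2^⌈log₂ k⌉ · Σᵢ r(Cᵢ)`. -/
theorem redContent_interleave_le
    (k : ℕ) (hk : 1 ≤ k) (cs : List (List ℝ)) (bs : List ℝ)
    (hcs : cs.length = k) (hbs : bs.length + 1 = k)
    (hodd : ∀ c ∈ cs, c.length % 2 = 1)
    (hposc : ∀ c ∈ cs, ∀ x ∈ c, 0 < x) (hposb : ∀ x ∈ bs, 0 < x)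
    (hnd : Nondegenerate (interleave cs bs))
    (ms : List (List ℝ))
    (hred : List.Forall₂
      (fun c mc => ∃ sc : List Step, Reduces c sc mc ∧ IsClosedConfig mc) cs ms)
    (s : List Step) (m : List ℝ)
    (h : Reduces (interleave cs bs) s m) (hc : IsClosedConfig m) :
    redSum m ≤ 2 ^ Nat.clog 2 k * (ms.map redSum).sum := by
  have hpos : ∀ x ∈ interleave cs bs, 0 < x := RedBlueAux.interleave_pos cs bs hposc hposb
  have h' := RedBlueAux.reduces_to_rtg h hpos
  have hms : List.Forall₂
      (fun c mc => Relation.ReflTransGen RedBlueAux.SRel c mc ∧ IsClosedConfig mc) cs ms :=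
    RedBlueAux.forall₂_conv hred hposc
  exact RedBlueAux.main k hk cs bs ms m hcs hbs hodd hposc hposb hms h' hc
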